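/- Suppose ℐ is a valuative closed subspace of 𝒢_K. Then there exists a unique minimal valuation v_ℐ of K (with respect to coarsening) such that ℐ ⊆ I_{v_ℐ}. A valuation v equals v_ℐ if and only if: (1) ℐ ⊆ I_v, equivalently U_v ⊆ ℐ^⊥; and (2) the subgroup v(ℐ^⊥) of the value group vK contains no nontrivial convex subgroups. -/

import Mathlib

/- Common definitions: Milnor K-theory of fields (possibly modulo a subgroup of `Kˣ`),
its rationalization, the dual space `𝒢_K` with the relation of alternating pairs,
and valuation-theoretic subspaces, following the paper. -/

set_option synthInstance.maxHeartbeats 400000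
set_option maxHeartbeats 1000000

open scoped TensorProduct

namespace Paper

section Milnor

variable (K : Type) [Field K]

/-- The Steinberg relation together with the relation killing a subgroup `T ≤ Kˣ`; used to
present `K^M_*(K|T) := K^M_*(K)/⟨T⟩` as a quotient of the tensor algebra of the
`ℤ`-module `Kˣ`. -/
inductive MilnorRel (T : Subgroup Kˣ) :
    TensorAlgebra ℤ (Additive Kˣ) → TensorAlgebra ℤ (Additive Kˣ) → Prop
  | steinberg (x y : Kˣ) (h : (x : K) + (y : K) = 1) :
      MilnorRel T (TensorAlgebra.ι ℤ (Additive.ofMul x) * TensorAlgebra.ι ℤ (Additive.ofMul y)) 0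
  | subgroup (x : Kˣ) (h : x ∈ T) :
      MilnorRel T (TensorAlgebra.ι ℤ (Additive.ofMul x)) 0

/-- The Milnor K-theory ring modulo a subgroup: `K^M_*(K|T)`.  For `T = ⊥` this is
Milnor K-theory `K^M_*(K)` itself. -/
abbrev MilnorK (T : Subgroup Kˣ) := RingQuot (MilnorRel K T)

/-- The canonical quotient map from the tensor algebra. -/
noncomputable def milnorMk (T : Subgroup Kˣ) :
    TensorAlgebra ℤ (Additive Kˣ) →+* MilnorK K T :=
  RingQuot.mkRingHom (MilnorRel K T)

/-- The symbol `{x}` in degree one of `K^M_*(K|T)`. -/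
noncomputable def symbol (T : Subgroup Kˣ) (x : Kˣ) : MilnorK K T :=
  milnorMk K T (TensorAlgebra.ι ℤ (Additive.ofMul x))

/-- The degree `n` part of `K^M_*(K|T)`, i.e. the image of the degree `n` part of the
tensor algebra. -/
noncomputable def milnorDeg (T : Subgroup Kˣ) (n : ℕ) : AddSubgroup (MilnorK K T) :=
  AddSubgroup.map (milnorMk K T).toAddMonoidHom
    (Submodule.toAddSubgroup
      ((LinearMap.range (TensorAlgebra.ι ℤ (M := Additive Kˣ))) ^ n))

/-- A ring isomorphism between Milnor K-rings is graded if it maps each degree onto the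
corresponding degree. -/
def IsGradedMilnorIso {K L : Type} [Field K] [Field L] {T : Subgroup Kˣ} {S : Subgroup Lˣ}
    (φ : MilnorK K T ≃+* MilnorK L S) : Prop :=
  ∀ n : ℕ, AddSubgroup.map φ.toRingHom.toAddMonoidHom (milnorDeg K T n) = milnorDeg L S n

/-- `𝒦_*(K|T) := ℚ ⊗_ℤ K^M_*(K|T)`. -/
abbrev MilnorKQ (T : Subgroup Kˣ) := ℚ ⊗[ℤ] MilnorK K T

/-- The symbol `{x}` in degree one of `𝒦_*(K|T)`. -/
noncomputable def symbolQ (T : Subgroup Kˣ) (x : Kˣ) : MilnorKQ K T :=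
  1 ⊗ₜ symbol K T x

/-- The degree `n` part of `𝒦_*(K|T)`. -/
noncomputable def milnorDegQ (T : Subgroup Kˣ) (n : ℕ) : Submodule ℚ (MilnorKQ K T) :=
  Submodule.span ℚ
    ((fun a => (1 : ℚ) ⊗ₜ a) ''
      ((milnorMk K T) ''
        ((LinearMap.range (TensorAlgebra.ι ℤ (M := Additive Kˣ))) ^ n : Submodule ℤ _)))

/-- An isomorphism of the graded `ℚ`-algebras `𝒦_*(K|T)` is graded if it maps each degree
onto the corresponding degree. -/
def IsGradedIsoQ {K L : Type} [Field K] [Field L] {T : Subgroup Kˣ} {S : Subgroup Lˣ}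
    (φ : MilnorKQ K T ≃ₐ[ℚ] MilnorKQ L S) : Prop :=
  ∀ n : ℕ, Submodule.map φ.toLinearMap (milnorDegQ K T n) = milnorDegQ L S n

variable {K}

/-- The ring homomorphism `K^M_*(K|T) → K^M_*(L|S)` induced by a field embedding `σ`
with `σ(T) ⊆ S`. -/
noncomputable def milnorMap {L : Type} [Field L] (σ : K →+* L)
    (T : Subgroup Kˣ) (S : Subgroup Lˣ)
    (h : ∀ x : Kˣ, x ∈ T → Units.map (σ : K →* L) x ∈ S) :
    MilnorK K T →+* MilnorK L S :=
  RingQuot.lift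
    ⟨(TensorAlgebra.lift ℤ
        (((milnorMk L S).toAddMonoidHom.comp
          ((TensorAlgebra.ι ℤ (M := Additive Lˣ)).toAddMonoidHom.comp
            (MonoidHom.toAdditive (Units.map (σ : K →* L))))).toIntLinearMap)).toRingHom,
     by
      rintro a b (⟨x, y, hxy⟩ | ⟨x, hx⟩)
      · simp only [AlgHom.toRingHom_eq_coe, RingHom.coe_coe, map_mul, map_zero,
          TensorAlgebra.lift_ι_apply]
        show milnorMk L S (TensorAlgebra.ι ℤ (Additive.ofMul (Units.map (σ : K →* L) x))) *
          milnorMk L S (TensorAlgebra.ι ℤ (Additive.ofMul (Units.map (σ : K →* L) y))) = 0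
        rw [← map_mul]
        have hsum : ((Units.map (σ : K →* L) x : Lˣ) : L) +
            ((Units.map (σ : K →* L) y : Lˣ) : L) = 1 := by
          simpa using congrArg σ hxy
        exact (RingQuot.mkRingHom_rel
          (MilnorRel.steinberg (T := S) _ _ hsum)).trans (map_zero _)
      · simp only [AlgHom.toRingHom_eq_coe, RingHom.coe_coe, map_zero,
          TensorAlgebra.lift_ι_apply]
        show milnorMk L S (TensorAlgebra.ι ℤ (Additive.ofMul (Units.map (σ : K →* L) x))) = 0
        exact (RingQuot.mkRingHom_rel
          (MilnorRel.subgroup (T := S) _ (h x hx))).trans (map_zero _)⟩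

/-- The induced ring homomorphism `𝒦_*(K|T) → 𝒦_*(L|S)`. -/
noncomputable def milnorMapQ {L : Type} [Field L] (σ : K →+* L)
    (T : Subgroup Kˣ) (S : Subgroup Lˣ)
    (h : ∀ x : Kˣ, x ∈ T → Units.map (σ : K →* L) x ∈ S) :
    MilnorKQ K T →+* MilnorKQ L S :=
  (Algebra.TensorProduct.map (AlgHom.id ℤ ℚ) (milnorMap σ T S h).toIntAlgHom).toRingHom

end Milnor

section Dual

variable (K : Type) [Field K]

/-- `𝒢_K := Hom_ℤ(Kˣ, ℚ)`. -/
abbrev GK := Additive Kˣ →ₗ[ℤ] ℚ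

/-- The weak topology on `𝒢_K`: the topology of pointwise convergence, `ℚ` being discrete. -/
noncomputable def gkTopology : TopologicalSpace (GK K) :=
  TopologicalSpace.induced (fun (f : GK K) (x : Additive Kˣ) => f x)
    (@Pi.topologicalSpace _ _ (fun _ => ⊥))

/-- A subspace of `𝒢_K` is closed if it is closed in the weak topology. -/
def IsClosedSubspace (H : Submodule ℚ (GK K)) : Prop :=
  @IsClosed _ (gkTopology K) (H : Set (GK K))

variable {K}

/-- `f, g ∈ 𝒢_K` form an alternating pair: `ℛ_K(f,g)`. -/
def AltPair (f g : GK K) : Prop :=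
  ∀ x y : Kˣ, (x : K) + (y : K) = 1 →
    f (Additive.ofMul x) * g (Additive.ofMul y) = f (Additive.ofMul y) * g (Additive.ofMul x)

variable (K)

/-- `𝒢_{K|T}`: the functionals vanishing on `T`. -/
def GKrel (T : Subgroup Kˣ) : Submodule ℚ (GK K) where
  carrier := {f | ∀ x ∈ T, f (Additive.ofMul x) = 0}
  add_mem' := by intro f g hf hg x hx; simp [hf x hx, hg x hx]
  zero_mem' := by intro x hx; simp
  smul_mem' := by intro c f hf x hx; simp [hf x hx]

/-- The `ℛ_K`-centralizer `C_K(𝒟)` of a subspace `𝒟 ⊆ 𝒢_K`. -/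
def RCentralizer (D : Submodule ℚ (GK K)) : Submodule ℚ (GK K) where
  carrier := {f | ∀ g ∈ D, AltPair f g}
  add_mem' := by
    intro f1 f2 h1 h2 g hg x y hxy
    have e1 := h1 g hg x y hxy
    have e2 := h2 g hg x y hxy
    simp only [LinearMap.add_apply]
    rw [add_mul, add_mul, e1, e2]
  zero_mem' := by intro g hg x y hxy; simp
  smul_mem' := by
    intro c f hf g hg x y hxy
    simp only [LinearMap.smul_apply, smul_eq_mul]
    rw [mul_assoc, mul_assoc, hf g hg x y hxy]

/-- The `ℛ_K`-centre `Z_K(𝒟)` of a subspace `𝒟 ⊆ 𝒢_K`. -/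
def RCentre (D : Submodule ℚ (GK K)) : Submodule ℚ (GK K) :=
  D ⊓ RCentralizer K D

/-- The orthogonal subgroup `ℋ^⊥ ⊆ Kˣ` of a subspace `ℋ ⊆ 𝒢_K`. -/
def perpSubgroup (H : Submodule ℚ (GK K)) : Subgroup Kˣ where
  carrier := {x | ∀ f ∈ H, f (Additive.ofMul x) = 0}
  one_mem' := by
    intro f hf
    show f (Additive.ofMul 1) = 0
    rw [ofMul_one, map_zero]
  mul_mem' := by
    intro x y hx hy f hf
    have : Additive.ofMul (x * y) = Additive.ofMul x + Additive.ofMul y := rfl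
    rw [this, map_add, hx f hf, hy f hf, add_zero]
  inv_mem' := by
    intro x hx f hf
    have : Additive.ofMul x⁻¹ = -Additive.ofMul x := rfl
    rw [this, map_neg, hx f hf, neg_zero]

/-- `I_v := 𝒢_{K|U_v}` for a valuation (given by its valuation subring `A`). -/
noncomputable def Ival (A : ValuationSubring K) : Submodule ℚ (GK K) := GKrel K A.unitGroup

/-- `D_v := 𝒢_{K|U_v^1}` for a valuation (given by its valuation subring `A`). -/
def Dval (A : ValuationSubring K) : Submodule ℚ (GK K) := GKrel K A.principalUnitGroup

/-- `A` is the valuation ring of the minimal valuation `v_ℐ` attached to a valuative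
subspace `ℐ`: one has `ℐ ⊆ I_v`, and `v` is minimal with this property.  Valuations are
ordered by coarsening (`v ≤ w` iff `v` is a coarsening of `w`, i.e. `𝒪_w ⊆ 𝒪_v`), so
minimality of the valuation means maximality of the valuation subring. -/
def IsMinValuationFor (A : ValuationSubring K) (I : Submodule ℚ (GK K)) : Prop :=
  I ≤ Ival K A ∧ ∀ B : ValuationSubring K, I ≤ Ival K B → B ≤ A

/-- The subgroup of `Kˣ` consisting of the units of a subfield `k ⊆ K`. -/
def subfieldUnits (k : Subfield K) : Subgroup Kˣ where
  carrier := {x | (x : K) ∈ k}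
  one_mem' := k.one_mem
  mul_mem' := by intro a b ha hb; exact k.mul_mem ha hb
  inv_mem' := by
    intro a ha
    show ((a⁻¹ : Kˣ) : K) ∈ k
    rw [Units.val_inv_eq_inv_val]
    exact k.inv_mem ha

/-- The valuation `v` (given by its valuation subring `A`) is `T`-visible:
`I_v ∩ 𝒢_{K|T} = Z_K(D_v ∩ 𝒢_{K|T}) ≠ D_v ∩ 𝒢_{K|T}`, and `v = v_ℐ` for
`ℐ = I_v ∩ 𝒢_{K|T}`. -/
def IsVisible (T : Subgroup Kˣ) (A : ValuationSubring K) : Prop :=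
  Ival K A ⊓ GKrel K T = RCentre K (Dval K A ⊓ GKrel K T) ∧
  Ival K A ⊓ GKrel K T ≠ Dval K A ⊓ GKrel K T ∧
  IsMinValuationFor K A (Ival K A ⊓ GKrel K T)

/-- A subgroup of the value group `vK = Kˣ/U_v` of the valuation corresponding to `A` is
represented by a subgroup `H` of `Kˣ` containing `U_v = A.unitGroup`; `H/U_v` is convex in
`vK` iff whenever `x ∈ H` and `0 ≤ v(y) ≤ v(x)`, also `y ∈ H`. -/
def IsConvexInValueGroup (A : ValuationSubring K) (H : Subgroup Kˣ) : Prop :=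
  A.unitGroup ≤ H ∧
    ∀ x y : Kˣ, x ∈ H → (y : K) ∈ A → ((x : K) * (y : K)⁻¹) ∈ A → y ∈ H

/-- The residue field `kv` of the restriction of the valuation to a subfield `k ⊆ K`,
as a subfield of the residue field `Kv`; it is the set of residues of elements
of `k ∩ 𝒪_v` (which is already closed under the field operations). -/
noncomputable def residueSubfield (A : ValuationSubring K) (k : Subfield K) :
    Subfield (IsLocalRing.ResidueField A) :=
  Subfield.closure ((IsLocalRing.residue A) '' {a : A | (a : K) ∈ k})

end Dual

section KQ

variable (K : Type) [Field K]

/-- A subgroup `T ≤ Kˣ` viewed as a `ℤ`-submodule of `Additive Kˣ`. -/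
def subgroupToSubmodule (T : Subgroup Kˣ) : Submodule ℤ (Additive Kˣ) :=
  AddSubgroup.toIntSubmodule (Subgroup.toAddSubgroup T)

/-- `𝒦_{K|T} := ℚ ⊗_ℤ (Kˣ/T) = 𝒦_1(K|T)`. -/
abbrev KQ (T : Subgroup Kˣ) := ℚ ⊗[ℤ] (Additive Kˣ ⧸ subgroupToSubmodule K T)

/-- The class of `x ∈ Kˣ` in `𝒦_{K|T}`; this is the canonical map `Kˣ → 𝒦_{K|T}`. -/
noncomputable def symbQ (T : Subgroup Kˣ) (x : Kˣ) : KQ K T :=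
  (1 : ℚ) ⊗ₜ Submodule.Quotient.mk (Additive.ofMul x)

/-- The map `Kˣ → 𝒦_1(K|T)`, `x ↦ {x}`, as a `ℤ`-linear map on `Additive Kˣ`. -/
noncomputable def symbolQLinear (T : Subgroup Kˣ) : Additive Kˣ →ₗ[ℤ] MilnorKQ K T :=
  ((Algebra.TensorProduct.includeRight :
      MilnorK K T →ₐ[ℤ] MilnorKQ K T).toLinearMap.toAddMonoidHom.comp
    ((milnorMk K T).toAddMonoidHom.comp
      (TensorAlgebra.ι ℤ (M := Additive Kˣ)).toAddMonoidHom)).toIntLinearMap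

/-- The canonical identification map `𝒦_{K|T} = 𝒦_1(K|T) → 𝒦_*(K|T)` onto degree one. -/
noncomputable def KQtoMilnor (T : Subgroup Kˣ) : KQ K T →ₗ[ℚ] MilnorKQ K T :=
  LinearMap.liftBaseChange ℚ <|
    Submodule.liftQ (subgroupToSubmodule K T) (symbolQLinear K T)
      (by
        intro x hx
        have h2 := RingQuot.mkRingHom_rel (MilnorRel.subgroup (T := T) (Additive.toMul x) hx)
        simp only [LinearMap.mem_ker]
        show (Algebra.TensorProduct.includeRight : MilnorK K T →ₐ[ℤ] MilnorKQ K T)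
          (milnorMk K T (TensorAlgebra.ι ℤ x)) = 0
        rw [show milnorMk K T (TensorAlgebra.ι ℤ x) = 0 from h2.trans (map_zero _), map_zero])

/-- A subspace `ℋ ⊆ 𝒦_{K|T}` is Milnor-closed if for every nonzero `s ∈ ℋ` and every
`t ∈ 𝒦_{K|T}` with `{s,t} = 0` in `𝒦_2(K|T)`, one has `t ∈ ℋ`. -/
def MilnorClosed (T : Subgroup Kˣ) (H : Submodule ℚ (KQ K T)) : Prop :=
  ∀ s ∈ H, s ≠ 0 → ∀ t : KQ K T, KQtoMilnor K T s * KQtoMilnor K T t = 0 → t ∈ H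

/-- The projection `ℚ ⊗_ℤ Kˣ → 𝒦_{K|T}`. -/
noncomputable def KQproj (T : Subgroup Kˣ) : (ℚ ⊗[ℤ] Additive Kˣ) →ₗ[ℚ] KQ K T :=
  LinearMap.baseChange ℚ (subgroupToSubmodule K T).mkQ

lemma KQproj_surjective (T : Subgroup Kˣ) : Function.Surjective (KQproj K T) := by
  intro z
  induction z using TensorProduct.induction_on with
  | zero => exact ⟨0, map_zero _⟩
  | tmul a b =>
      obtain ⟨u, hu⟩ := Submodule.Quotient.mk_surjective (subgroupToSubmodule K T) b
      exact ⟨a ⊗ₜ u, by rw [KQproj, LinearMap.baseChange_tmul, Submodule.mkQ_apply, hu]⟩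
  | add x y hx hy =>
      obtain ⟨x', hx'⟩ := hx
      obtain ⟨y', hy'⟩ := hy
      exact ⟨x' + y', by rw [map_add, hx', hy']⟩

/-- The canonical pairing `𝒦_{K|T} × 𝒢_{K|T} → ℚ`.  It takes the correct value
`⟨s, f⟩` whenever `f` vanishes on `T` (in which case the value is independent of the
choice of preimage), and junk values otherwise. -/
noncomputable def gpair (T : Subgroup Kˣ) (f : GK K) (s : KQ K T) : ℚ :=
  (LinearMap.liftBaseChange ℚ f) (Function.surjInv (KQproj_surjective K T) s)

/-- The image of `𝒦_{L|k}` in `𝒦_{K|k}`, i.e. the subspace spanned by the classes of the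
elements of `Lˣ`. -/
noncomputable def subfieldSpan (k : Subfield K) (L : Subfield K) :
    Submodule ℚ (KQ K (subfieldUnits K k)) :=
  Submodule.span ℚ {s | ∃ x : Kˣ, (x : K) ∈ L ∧ s = symbQ K (subfieldUnits K k) x}

end KQ

section FieldTheory

variable (K : Type) [Field K]

/-- `k` is relatively algebraically closed in `K`. -/
def IsRelAlgClosed (k : Subfield K) : Prop := ∀ x : K, IsAlgebraic k x → x ∈ k

/-- The relative algebraic closure of a subfield `M` in `K` (the set of elements of `K`
algebraic over `M`, which is already a subfield). -/
def relAlgClosure (M : Subfield K) : Subfield K :=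
  Subfield.closure {x : K | IsAlgebraic M x}

/-- The transcendence degree `trdeg(L|k)` of an extension of subfields of `K`:
the supremum of the cardinalities of subsets of `L` that are algebraically independent
over `k`.  `trdeg K k ⊤` is `trdeg(K|k)`. -/
noncomputable def trdeg (k L : Subfield K) : Cardinal :=
  ⨆ s : {s : Set K // s ⊆ (L : Set K) ∧ AlgebraicIndependent k ((↑) : s → K)},
    Cardinal.mk s.1

/-- The perfect closure `k^i` of a subfield `k ⊆ K` inside a perfect closure
`iK : K → Ki` of `K` (with respect to the characteristic exponent `p`): the set of
elements with a `p`-power in `iK(k)` (already a subfield). -/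
def subPerfectClosure {Ki : Type} [Field Ki] (iK : K →+* Ki) (k : Subfield K) (p : ℕ) :
    Subfield Ki :=
  Subfield.closure {x : Ki | ∃ n : ℕ, ∃ a : K, a ∈ k ∧ x ^ p ^ n = iK a}

variable {K}

lemma subfield_units_map {L : Type} [Field L] (σ : K →+* L) (k : Subfield K)
    (l : Subfield L) (h : ∀ x ∈ k, σ x ∈ l) :
    ∀ x : Kˣ, x ∈ subfieldUnits K k → Units.map (σ : K →* L) x ∈ subfieldUnits L l :=
  fun x hx => h x hx

lemma mem_subPerfectClosure {Ki : Type} [Field Ki] (iK : K →+* Ki) (k : Subfield K)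
    (p : ℕ) : ∀ x ∈ k, iK x ∈ subPerfectClosure K iK k p :=
  fun x hx => Subfield.subset_closure ⟨0, x, hx, by simp⟩

lemma bot_units_map {L : Type} [Field L] (σ : K →+* L) (S : Subgroup Lˣ) :
    ∀ x : Kˣ, x ∈ (⊥ : Subgroup Kˣ) → Units.map (σ : K →* L) x ∈ S := by
  intro x hx
  rw [Subgroup.mem_bot] at hx
  subst hx
  rw [map_one]
  exact S.one_mem

end FieldTheory



section Statement8Proof

variable {K : Type} [Field K]

open ValuationSubring

lemma memU_iff (A : ValuationSubring K) (x : Kˣ) :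
    x ∈ A.unitGroup ↔ ((x : K) ∈ A ∧ ((x⁻¹ : Kˣ) : K) ∈ A) := by
  rw [mem_unitGroup_iff]
  have hx0 : (x : K) ≠ 0 := x.ne_zero
  have hinv : ((x⁻¹ : Kˣ) : K) = (x : K)⁻¹ := x.val_inv_eq_inv_val
  have hv0 : A.valuation (x:K) ≠ 0 := (Valuation.ne_zero_iff _).2 hx0
  constructor
  · intro h
    refine ⟨(A.valuation_le_one_iff _).1 h.le, (A.valuation_le_one_iff _).1 ?_⟩
    rw [hinv, map_inv₀, h, inv_one]
  · rintro ⟨h1, h2⟩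
    rw [← A.valuation_le_one_iff] at h1 h2
    rw [hinv, map_inv₀] at h2
    refine le_antisymm h1 ?_
    calc (1 : _) = A.valuation (x:K) * (A.valuation (x:K))⁻¹ := (mul_inv_cancel₀ hv0).symm
      _ ≤ A.valuation (x:K) * 1 := mul_le_mul_right h2 _
      _ = A.valuation (x:K) := mul_one _

/-- Weak approximation step for incomparable valuation subrings. -/
lemma core_approx (A B : ValuationSubring K) (hAB : ¬ A ≤ B) (hBA : ¬ B ≤ A)
    {y b : K} (hy0 : y ≠ 0) (hy : A.valuation y ≤ 1) (hb : B.valuation b = 1)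
    (hby : A.valuation b ≤ A.valuation y) :
    ∃ b' : K, B.valuation b' = 1 ∧ A.valuation b' = A.valuation y := by
  obtain ⟨s, hsA, hsB⟩ := SetLike.not_le_iff_exists.mp hAB
  obtain ⟨t, htB, htA⟩ := SetLike.not_le_iff_exists.mp hBA
  set v := A.valuation with hvdef
  set w := B.valuation with hwdef
  have hs0 : s ≠ 0 := fun h => hsB (h ▸ B.zero_mem)
  have ht0 : t ≠ 0 := fun h => htA (h ▸ A.zero_mem)
  have hvs : v s ≤ 1 := (A.valuation_le_one_iff s).2 hsA
  have hws : 1 < w s := not_le.mp (fun h => hsB ((B.valuation_le_one_iff s).1 h))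
  have hwt : w t ≤ 1 := (B.valuation_le_one_iff t).2 htB
  have hvt : 1 < v t := not_le.mp (fun h => htA ((A.valuation_le_one_iff t).1 h))
  have hvt0 : v t ≠ 0 := (Valuation.ne_zero_iff _).2 ht0
  have hwt0 : w t ≠ 0 := (Valuation.ne_zero_iff _).2 ht0
  have hvy0 : v y ≠ 0 := (Valuation.ne_zero_iff _).2 hy0
  have hwy0 : w y ≠ 0 := (Valuation.ne_zero_iff _).2 hy0
  have hb0 : b ≠ 0 := fun h => by rw [h, map_zero] at hb; exact zero_ne_one hb
  have hvb0 : v b ≠ 0 := (Valuation.ne_zero_iff _).2 hb0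
  -- find x with v x < 1, 1 < w x, w y < w x
  have key : ∃ x : K, v x < 1 ∧ 1 < w x ∧ w y < w x := by
    by_cases hcase : w y ≤ 1
    · have h2 : 1 < w (s / t) := by
        have hx : w (s / t) * w t = w s := by
          rw [← map_mul, div_mul_cancel₀ _ ht0]
        by_contra hge
        push_neg at hge
        have : w s ≤ 1 := by
          calc w s = w (s / t) * w t := hx.symm
            _ ≤ 1 * w t := mul_le_mul_left hge _
            _ = w t := one_mul _
            _ ≤ 1 := hwt
        exact absurd this (not_le.mpr hws)
      refine ⟨s / t, ?_, h2, lt_of_le_of_lt hcase h2⟩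
      have hx : v (s / t) * v t = v s := by
        rw [← map_mul, div_mul_cancel₀ _ ht0]
      by_contra hge
      push_neg at hge
      have : v t ≤ v s := by
        calc v t = 1 * v t := (one_mul _).symm
          _ ≤ v (s / t) * v t := mul_le_mul_left hge _
          _ = v s := hx
      exact absurd (this.trans hvs) (not_le.mpr hvt)
    · push_neg at hcase
      have h3 : w y < w (y * s / t) := by
        have hx : w (y * s / t) * w t = w y * w s := by
          rw [← map_mul, div_mul_cancel₀ _ ht0, map_mul]
        by_contra hge
        push_neg at hge
        have hle : w y * w s ≤ w y * 1 := by
          calc w y * w s = w (y * s / t) * w t := hx.symm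
            _ ≤ w y * w t := mul_le_mul_left hge _
            _ ≤ w y * 1 := mul_le_mul_right hwt _
        have : w s ≤ 1 :=
          le_of_mul_le_mul_left hle (lt_of_le_of_ne (zero_le') (Ne.symm hwy0))
        exact absurd this (not_le.mpr hws)
      refine ⟨y * s / t, ?_, lt_trans hcase h3, h3⟩
      have hx : v (y * s / t) * v t = v y * v s := by
        rw [← map_mul, div_mul_cancel₀ _ ht0, map_mul]
      by_contra hge
      push_neg at hge
      have h1 : v y * v s ≤ 1 := by
        calc v y * v s ≤ 1 * 1 := mul_le_mul' hy hvs
          _ = 1 := one_mul _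
      have : v t ≤ 1 := by
        calc v t = 1 * v t := (one_mul _).symm
          _ ≤ v (y * s / t) * v t := mul_le_mul_left hge _
          _ = v y * v s := hx
          _ ≤ 1 := h1
      exact absurd this (not_le.mpr hvt)
  obtain ⟨x, hvx, hwx, hwyx⟩ := key
  have hx0 : x ≠ 0 := fun h => by
    rw [h, map_zero] at hwx; exact absurd hwx (by simp)
  have hwx0 : w x ≠ 0 := (Valuation.ne_zero_iff _).2 hx0
  -- b' := (y + b*x)/(1+x)
  have hvbx : v (b * x) < v y := by
    rw [map_mul]
    calc v b * v x ≤ v y * v x := mul_le_mul_left hby _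
      _ < v y * 1 := by
          exact mul_lt_mul_of_pos_left hvx (zero_lt_iff.2 hvy0)
      _ = v y := mul_one _
  have hwbx : w (b * x) = w x := by rw [map_mul, hb, one_mul]
  have hnum_v : v (y + b * x) = v y := by
    rw [add_comm]
    exact Valuation.map_add_eq_of_lt_right _ hvbx
  have hnum_w : w (y + b * x) = w x := by
    rw [Valuation.map_add_eq_of_lt_right _ (hwbx ▸ hwyx : w y < w (b*x)), hwbx]
  have hden_v : v (1 + x) = 1 := by
    have := Valuation.map_add_eq_of_lt_left v (show v x < v 1 by rwa [map_one])
    rwa [map_one] at this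
  have hden_w : w (1 + x) = w x := by
    have := Valuation.map_add_eq_of_lt_right w (show w 1 < w x by rwa [map_one])
    exact this
  refine ⟨(y + b * x) / (1 + x), ?_, ?_⟩
  · rw [map_div₀, hnum_w, hden_w, div_self hwx0]
  · rw [map_div₀, hnum_v, hden_v, div_one]

/-- Coarsening-type construction: elements that can be pushed into `A` by `H ∩ A`. -/
def mkCoarse (A : ValuationSubring K) (H : Subgroup Kˣ) : ValuationSubring K where
  carrier := {z : K | ∃ h : Kˣ, h ∈ H ∧ ((h : K) ∈ A) ∧ z * (h : K) ∈ A}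
  one_mem' := ⟨1, H.one_mem, by simpa using A.one_mem, by simpa using A.one_mem⟩
  zero_mem' := ⟨1, H.one_mem, by simpa using A.one_mem, by simpa using A.zero_mem⟩
  mul_mem' := by
    rintro a b ⟨h₁, hh₁, hh₁A, ha⟩ ⟨h₂, hh₂, hh₂A, hb⟩
    refine ⟨h₁ * h₂, H.mul_mem hh₁ hh₂, ?_, ?_⟩
    · rw [Units.val_mul]; exact mul_mem hh₁A hh₂A
    · rw [Units.val_mul, show a * b * ((h₁:K) * (h₂:K)) = (a * h₁) * (b * h₂) by ring]
      exact mul_mem ha hb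
  add_mem' := by
    rintro a b ⟨h₁, hh₁, hh₁A, ha⟩ ⟨h₂, hh₂, hh₂A, hb⟩
    refine ⟨h₁ * h₂, H.mul_mem hh₁ hh₂, ?_, ?_⟩
    · rw [Units.val_mul]; exact mul_mem hh₁A hh₂A
    · rw [Units.val_mul, show (a + b) * ((h₁:K) * (h₂:K)) =
        (a * h₁) * h₂ + (b * h₂) * h₁ by ring]
      exact add_mem (mul_mem ha hh₂A) (mul_mem hb hh₁A)
  neg_mem' := by
    rintro a ⟨h₁, hh₁, hh₁A, ha⟩
    exact ⟨h₁, hh₁, hh₁A, by rw [show -a * (h₁:K) = -(a * h₁) by ring]; exact neg_mem ha⟩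
  mem_or_inv_mem' := fun z =>
    (A.mem_or_inv_mem z).imp
      (fun h => ⟨1, H.one_mem, by simpa using A.one_mem, by simpa using h⟩)
      (fun h => ⟨1, H.one_mem, by simpa using A.one_mem, by simpa using h⟩)

lemma mem_mkCoarse {A : ValuationSubring K} {H : Subgroup Kˣ} {z : K} :
    z ∈ mkCoarse A H ↔ ∃ h : Kˣ, h ∈ H ∧ ((h : K) ∈ A) ∧ z * (h : K) ∈ A := Iff.rfl

lemma le_mkCoarse (A : ValuationSubring K) (H : Subgroup Kˣ) : A ≤ mkCoarse A H :=
  fun z hz => ⟨1, H.one_mem, by simpa using A.one_mem, by simpa using hz⟩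


/-- Every element of `H` is a unit of `mkCoarse A H`. -/
lemma mem_unitGroup_mkCoarse {A : ValuationSubring K} {H : Subgroup Kˣ} {h : Kˣ}
    (hh : h ∈ H) : h ∈ (mkCoarse A H).unitGroup := by
  rw [memU_iff]
  have hinv : ((h⁻¹ : Kˣ) : K) = (h : K)⁻¹ := h.val_inv_eq_inv_val
  rcases A.mem_or_inv_mem (h : K) with hA | hA
  · exact ⟨le_mkCoarse A H hA,
      ⟨h, hh, hA, by rw [hinv, inv_mul_cancel₀ h.ne_zero]; exact A.one_mem⟩⟩
  · rw [← hinv] at hA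
    exact ⟨⟨h⁻¹, H.inv_mem hh, hA, by rw [hinv, mul_inv_cancel₀ h.ne_zero]; exact A.one_mem⟩,
      le_mkCoarse A H hA⟩

lemma unitGroup_mkCoarse_spec {A : ValuationSubring K} {H : Subgroup Kˣ} {x : Kˣ}
    (hx : x ∈ (mkCoarse A H).unitGroup) :
    ∃ h h' : Kˣ, h ∈ H ∧ h' ∈ H ∧ (h : K) ∈ A ∧ (h' : K) ∈ A ∧
      (x : K) * (h : K) ∈ A ∧ ((x⁻¹ : Kˣ) : K) * (h' : K) ∈ A := by
  rw [memU_iff] at hx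
  obtain ⟨⟨h, hh, hhA, hxh⟩, ⟨h', hh', hh'A, hxh'⟩⟩ := hx
  exact ⟨h, h', hh, hh', hhA, hh'A, hxh, hxh'⟩

lemma unitGroup_mkCoarse_le_of_convex {A : ValuationSubring K} {H : Subgroup Kˣ}
    (hconv : IsConvexInValueGroup K A H) : (mkCoarse A H).unitGroup ≤ H := by
  intro x hx
  obtain ⟨h, h', hh, hh', hhA, hh'A, hxh, hxh'⟩ := unitGroup_mkCoarse_spec hx
  have hkey : x * h ∈ H := by
    refine hconv.2 (h * h') (x * h) (H.mul_mem hh hh') ?_ ?_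
    · rw [Units.val_mul]; exact hxh
    · have heq : ((h * h' : Kˣ) : K) * (((x * h : Kˣ) : K))⁻¹
          = ((x⁻¹ : Kˣ) : K) * (h' : K) := by
        rw [Units.val_mul, Units.val_mul, x.val_inv_eq_inv_val]
        have hx0 : (x : K) ≠ 0 := x.ne_zero
        have hh0 : (h : K) ≠ 0 := h.ne_zero
        field_simp
      rw [heq]; exact hxh'
  have := H.mul_mem hkey (H.inv_mem hh)
  simpa using this

lemma unitGroup_mkCoarse_sup_le {A B : ValuationSubring K} (hAB : ¬ A ≤ B) (hBA : ¬ B ≤ A)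
    {P : Subgroup Kˣ} (hA : A.unitGroup ≤ P) (hB : B.unitGroup ≤ P) :
    (mkCoarse A (A.unitGroup ⊔ B.unitGroup)).unitGroup ≤ P := by
  intro x hx
  obtain ⟨h, h', hh, hh', hhA, hh'A, hxh, hxh'⟩ := unitGroup_mkCoarse_spec hx
  rw [Subgroup.mem_sup] at hh hh'
  obtain ⟨a, ha, b, hbmem, rfl⟩ := hh
  obtain ⟨a', ha', b2, hb2, rfl⟩ := hh'
  set v := A.valuation with hv
  set w := B.valuation with hw
  have hva : v (a : K) = 1 := (A.mem_unitGroup_iff a).1 ha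
  have hva' : v (a' : K) = 1 := (A.mem_unitGroup_iff a').1 ha'
  have hwb : w (b : K) = 1 := (B.mem_unitGroup_iff b).1 hbmem
  have hwb2 : w (b2 : K) = 1 := (B.mem_unitGroup_iff b2).1 hb2
  have hx0 : (x : K) ≠ 0 := x.ne_zero
  have hvx0 : v (x : K) ≠ 0 := (Valuation.ne_zero_iff _).2 hx0
  have hvb0 : v (b : K) ≠ 0 := (Valuation.ne_zero_iff _).2 b.ne_zero
  -- v x * v b ≤ 1
  have hv1 : v (x : K) * v (b : K) ≤ 1 := by
    have := (A.valuation_le_one_iff _).2 hxh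
    rwa [Units.val_mul, map_mul, map_mul, hva, one_mul] at this
  -- v b2 ≤ v x
  have hv2 : v (b2 : K) ≤ v (x : K) := by
    have h0 := (A.valuation_le_one_iff _).2 hxh'
    rw [Units.val_mul, map_mul, map_mul, hva', one_mul, x.val_inv_eq_inv_val, map_inv₀] at h0
    calc v (b2 : K) = v (x : K) * ((v (x : K))⁻¹ * v (b2 : K)) := by
          rw [← mul_assoc, mul_inv_cancel₀ hvx0, one_mul]
      _ ≤ v (x : K) * 1 := mul_le_mul_right h0 _
      _ = v (x : K) := mul_one _
  -- apply core approximation with y = x*b, b = b*b2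
  have hy0 : (x : K) * (b : K) ≠ 0 := mul_ne_zero hx0 b.ne_zero
  have hy : v ((x : K) * (b : K)) ≤ 1 := by rwa [map_mul]
  have hwbc : w ((b : K) * (b2 : K)) = 1 := by rw [map_mul, hwb, hwb2, one_mul]
  have hby : v ((b : K) * (b2 : K)) ≤ v ((x : K) * (b : K)) := by
    rw [map_mul, map_mul, mul_comm (v (x : K))]
    exact mul_le_mul_right hv2 _
  obtain ⟨b', hwb', hvb'⟩ := core_approx A B hAB hBA hy0 hy hwbc hby
  have hb'0 : b' ≠ 0 := by
    intro h0; rw [h0, map_zero] at hwb'; exact zero_ne_one hwb'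
  set bu : Kˣ := Units.mk0 b' hb'0 with hbu
  have hbuB : bu ∈ B.unitGroup := by
    rw [B.mem_unitGroup_iff]; simpa [hbu] using hwb'
  have hxbbu : x * b * bu⁻¹ ∈ A.unitGroup := by
    rw [A.mem_unitGroup_iff]
    have hco : ((x * b * bu⁻¹ : Kˣ) : K) = (x : K) * (b : K) * b'⁻¹ := by
      rw [Units.val_mul, Units.val_mul, Units.val_inv_eq_inv_val]
      simp [hbu]
    rw [hco, map_mul, map_inv₀, hvb']
    exact mul_inv_cancel₀ ((Valuation.ne_zero_iff _).2 hy0)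
  have hfact : x = (x * b * bu⁻¹) * bu * b⁻¹ := by group
  rw [hfact]
  exact P.mul_mem (P.mul_mem (hA hxbbu) (hB hbuB)) (P.inv_mem (hB hbmem))

lemma exists_unitB_val_lt_one {A B : ValuationSubring K} (hAB : ¬ A ≤ B) (hBA : ¬ B ≤ A) :
    ∃ p : Kˣ, p ∈ B.unitGroup ∧ A.valuation (p : K) < 1 := by
  obtain ⟨s, hsA, hsB⟩ := SetLike.not_le_iff_exists.mp hAB
  obtain ⟨t, htB, htA⟩ := SetLike.not_le_iff_exists.mp hBA
  set v := A.valuation with hv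
  set w := B.valuation with hw
  have hs0 : s ≠ 0 := fun h => hsB (h ▸ B.zero_mem)
  have ht0 : t ≠ 0 := fun h => htA (h ▸ A.zero_mem)
  have hvs : v s ≤ 1 := (A.valuation_le_one_iff s).2 hsA
  have hws : 1 < w s := not_le.mp (fun h => hsB ((B.valuation_le_one_iff s).1 h))
  have hwt : w t ≤ 1 := (B.valuation_le_one_iff t).2 htB
  have hvt : 1 < v t := not_le.mp (fun h => htA ((A.valuation_le_one_iff t).1 h))
  have hws0 : w s ≠ 0 := (Valuation.ne_zero_iff _).2 hs0
  have hvt0 : v t ≠ 0 := (Valuation.ne_zero_iff _).2 ht0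
  have hsumv : v (s + t) = v t := Valuation.map_add_eq_of_lt_right _ (hvs.trans_lt hvt)
  have hsumw : w (s + t) = w s := Valuation.map_add_eq_of_lt_left _ (hwt.trans_lt hws)
  have hst0 : s + t ≠ 0 := by
    intro h0
    rw [h0, map_zero] at hsumv
    exact hvt0 hsumv.symm
  have hp0 : s / (s + t) ≠ 0 := div_ne_zero hs0 hst0
  refine ⟨Units.mk0 _ hp0, ?_, ?_⟩
  · rw [B.mem_unitGroup_iff]
    show w (s / (s + t)) = 1
    rw [map_div₀, hsumw, div_self hws0]
  · show v (s / (s + t)) < 1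
    have hx : v (s / (s + t)) * v t = v s := by
      rw [← hsumv, ← map_mul, div_mul_cancel₀ _ hst0]
    by_contra hge
    push_neg at hge
    have : v t ≤ 1 := by
      calc v t = 1 * v t := (one_mul _).symm
        _ ≤ v (s / (s + t)) * v t := mul_le_mul_left hge _
        _ = v s := hx
        _ ≤ 1 := hvs
    exact absurd this (not_le.mpr hvt)

lemma mkCoarse_sup_not_le {A B : ValuationSubring K} (hAB : ¬ A ≤ B) (hBA : ¬ B ≤ A) :
    ¬ (mkCoarse A (A.unitGroup ⊔ B.unitGroup) ≤ A) := by
  obtain ⟨p, hpB, hpv⟩ := exists_unitB_val_lt_one hAB hBA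
  have hpA : (p : K) ∈ A := (A.valuation_le_one_iff _).1 hpv.le
  have hmem : ((p⁻¹ : Kˣ) : K) ∈ mkCoarse A (A.unitGroup ⊔ B.unitGroup) :=
    ⟨p, Subgroup.mem_sup_right hpB, hpA, by
      rw [p.val_inv_eq_inv_val, inv_mul_cancel₀ p.ne_zero]; exact A.one_mem⟩
  intro hle
  have hinvA : ((p⁻¹ : Kˣ) : K) ∈ A := hle hmem
  have h1 : A.valuation ((p : K))⁻¹ ≤ 1 := by
    rw [← p.val_inv_eq_inv_val]; exact (A.valuation_le_one_iff _).2 hinvA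
  have hvp0 : A.valuation (p : K) ≠ 0 := (Valuation.ne_zero_iff _).2 p.ne_zero
  have hge : (1 : A.ValueGroup) ≤ A.valuation (p : K) := by
    calc (1 : A.ValueGroup) = A.valuation (p : K) * (A.valuation (p : K))⁻¹ :=
          (mul_inv_cancel₀ hvp0).symm
      _ ≤ A.valuation (p : K) * 1 := by
          rw [← map_inv₀]; exact mul_le_mul_right h1 _
      _ = A.valuation (p : K) := mul_one _
  exact absurd hpv (not_lt.mpr hge)

lemma le_Ival_iff {I : Submodule ℚ (GK K)} {B : ValuationSubring K} :
    I ≤ Ival K B ↔ B.unitGroup ≤ perpSubgroup K I := by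
  constructor
  · intro h u hu f hf
    exact h hf u hu
  · intro h f hf u hu
    exact h hu f hf

lemma convex_unitGroup_of_le {A D : ValuationSubring K} (h : A ≤ D) :
    IsConvexInValueGroup K A D.unitGroup := by
  constructor
  · intro u hu
    rw [memU_iff] at hu ⊢
    exact ⟨h hu.1, h hu.2⟩
  · intro x y hx hyA hxy
    rw [memU_iff] at hx ⊢
    refine ⟨h hyA, ?_⟩
    have heq : ((y⁻¹ : Kˣ) : K) = ((x⁻¹ : Kˣ) : K) * ((x : K) * ((y : K))⁻¹) := by
      rw [x.val_inv_eq_inv_val, y.val_inv_eq_inv_val]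
      have hx0 : (x : K) ≠ 0 := x.ne_zero
      field_simp
    rw [heq]
    exact mul_mem hx.2 (h hxy)

lemma le_of_unitGroup_eq {A B : ValuationSubring K} (h : A ≤ B)
    (he : B.unitGroup = A.unitGroup) : B ≤ A := by
  intro z hz
  by_cases hz0 : z = 0
  · rw [hz0]; exact A.zero_mem
  rcases A.mem_or_inv_mem z with hA | hA
  · exact hA
  · have hu : Units.mk0 z hz0 ∈ B.unitGroup := by
      rw [memU_iff]
      constructor
      · simpa using hz
      · have : (((Units.mk0 z hz0)⁻¹ : Kˣ) : K) = z⁻¹ := by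
          rw [Units.val_inv_eq_inv_val]; simp
        rw [this]; exact h hA
    rw [he, memU_iff] at hu
    simpa using hu.1

lemma key_max {P : Subgroup Kˣ} {A : ValuationSubring K} (hA : A.unitGroup ≤ P)
    (h2 : ∀ H : Subgroup Kˣ, IsConvexInValueGroup K A H → H ≤ P → H = A.unitGroup)
    {B : ValuationSubring K} (hB : B.unitGroup ≤ P) : B ≤ A := by
  by_cases hBA : B ≤ A
  · exact hBA
  by_cases hAB : A ≤ B
  · exact le_of_unitGroup_eq hAB (h2 B.unitGroup (convex_unitGroup_of_le hAB) hB)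
  · exfalso
    have hAD : A ≤ mkCoarse A (A.unitGroup ⊔ B.unitGroup) := le_mkCoarse _ _
    have hUD := unitGroup_mkCoarse_sup_le hAB hBA hA hB
    have hEq := h2 _ (convex_unitGroup_of_le hAD) hUD
    obtain ⟨p, hpB, hpv⟩ := exists_unitB_val_lt_one hAB hBA
    have hpD : p ∈ (mkCoarse A (A.unitGroup ⊔ B.unitGroup)).unitGroup :=
      mem_unitGroup_mkCoarse (Subgroup.mem_sup_right hpB)
    rw [hEq] at hpD
    exact absurd ((A.mem_unitGroup_iff p).1 hpD) (ne_of_lt hpv)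

lemma chain_ub {c : Set (ValuationSubring K)} (hc : IsChain (· ≤ ·) c)
    {y : ValuationSubring K} (hy : y ∈ c)
    {P : Subgroup Kˣ} (hcP : ∀ A ∈ c, A.unitGroup ≤ P) :
    ∃ ub : ValuationSubring K, ub.unitGroup ≤ P ∧ ∀ z ∈ c, z ≤ ub := by
  haveI : Nonempty c := ⟨⟨y, hy⟩⟩
  have hdir : Directed (· ≤ ·) (fun A : c => (A : ValuationSubring K).toSubring) := by
    intro i j
    rcases hc.total i.2 j.2 with h | h
    · exact ⟨j, fun x hx => h hx, le_rfl⟩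
    · exact ⟨i, le_rfl, fun x hx => h hx⟩
  set R : Subring K := ⨆ A : c, (A : ValuationSubring K).toSubring with hR
  have hle : ∀ z ∈ c, z.toSubring ≤ R := fun z hz =>
    le_iSup (fun A : c => (A : ValuationSubring K).toSubring) ⟨z, hz⟩
  refine ⟨⟨R, fun z => (y.mem_or_inv_mem z).imp (fun h => hle y hy h) (fun h => hle y hy h)⟩,
    ?_, fun z hz x hx => hle z hz hx⟩
  intro u hu
  rw [memU_iff] at hu
  obtain ⟨h1, h2⟩ := hu
  obtain ⟨⟨A₁, hA₁⟩, hu1⟩ := (Subring.mem_iSup_of_directed hdir).1 h1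
  obtain ⟨⟨A₂, hA₂⟩, hu2⟩ := (Subring.mem_iSup_of_directed hdir).1 h2
  rcases hc.total hA₁ hA₂ with h | h
  · exact hcP A₂ hA₂ ((memU_iff A₂ u).2 ⟨h hu1, hu2⟩)
  · exact hcP A₁ hA₁ ((memU_iff A₁ u).2 ⟨hu1, h hu2⟩)

end Statement8Proof

/-- A valuative closed subspace `ℐ ⊆ 𝒢_K` has a unique minimal (with
respect to coarsening) valuation `v_ℐ` with `ℐ ⊆ I_{v_ℐ}`, and `v = v_ℐ` iff
(1) `ℐ ⊆ I_v` (equivalently `U_v ⊆ ℐ^⊥`) and (2) `v(ℐ^⊥)` contains no nontrivial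
convex subgroups of the value group `vK`. -/
theorem min_valuation_exists_unique (K : Type) [Field K] (I : Submodule ℚ (GK K))
    (hcl : IsClosedSubspace K I) (hval : ∃ B : ValuationSubring K, I ≤ Ival K B) :
    (∃! A : ValuationSubring K, IsMinValuationFor K A I) ∧
    (∀ A : ValuationSubring K, IsMinValuationFor K A I ↔
      ((I ≤ Ival K A ∧ A.unitGroup ≤ perpSubgroup K I) ∧
        ∀ H : Subgroup Kˣ, IsConvexInValueGroup K A H →
          H ≤ A.unitGroup ⊔ perpSubgroup K I → H = A.unitGroup)) := by
  classical
  set P := perpSubgroup K I with hP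
  have hIval : ∀ B : ValuationSubring K, I ≤ Ival K B ↔ B.unitGroup ≤ P :=
    fun B => le_Ival_iff
  obtain ⟨B₀, hB₀⟩ := hval
  have hB₀P : B₀.unitGroup ≤ P := (hIval B₀).1 hB₀
  obtain ⟨M, _hB₀M, hMmax⟩ := zorn_le_nonempty₀
    {B : ValuationSubring K | B.unitGroup ≤ P}
    (fun c hcS hc y hy => by
      obtain ⟨ub, h1, h2⟩ := chain_ub hc hy (fun A hA => hcS hA)
      exact ⟨ub, h1, h2⟩) B₀ hB₀P
  have hMP : M.unitGroup ≤ P := hMmax.1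
  have hMmax' : ∀ B : ValuationSubring K, B.unitGroup ≤ P → B ≤ M := by
    intro B hB
    by_cases hBM : B ≤ M
    · exact hBM
    by_cases hMB : M ≤ B
    · exact hMmax.2 hB hMB
    · exfalso
      have hUD := unitGroup_mkCoarse_sup_le hMB hBM hMP hB
      have hDM : mkCoarse M (M.unitGroup ⊔ B.unitGroup) ≤ M := hMmax.2 hUD (le_mkCoarse _ _)
      exact mkCoarse_sup_not_le hMB hBM hDM
  have hMmin : IsMinValuationFor K M I :=
    ⟨(hIval M).2 hMP, fun B hB => hMmax' B ((hIval B).1 hB)⟩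
  have hchar : ∀ A : ValuationSubring K, IsMinValuationFor K A I ↔
      ((I ≤ Ival K A ∧ A.unitGroup ≤ perpSubgroup K I) ∧
        ∀ H : Subgroup Kˣ, IsConvexInValueGroup K A H →
          H ≤ A.unitGroup ⊔ perpSubgroup K I → H = A.unitGroup) := by
    intro A
    constructor
    · rintro ⟨h1, hmin⟩
      have hUA : A.unitGroup ≤ P := (hIval A).1 h1
      refine ⟨⟨h1, hUA⟩, ?_⟩
      intro H hconv hHle
      have hHP : H ≤ P := by
        have hsup : A.unitGroup ⊔ P ≤ P := sup_le hUA le_rfl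
        exact fun x hx => hsup (hHle hx)
      have hUD : (mkCoarse A H).unitGroup ≤ H := unitGroup_mkCoarse_le_of_convex hconv
      have hDA : mkCoarse A H ≤ A := hmin _ ((hIval _).2 (hUD.trans hHP))
      have hDAeq : mkCoarse A H = A := le_antisymm hDA (le_mkCoarse _ _)
      refine le_antisymm ?_ hconv.1
      intro h hh
      have hhD := mem_unitGroup_mkCoarse (A := A) (H := H) hh
      rw [hDAeq] at hhD
      exact hhD
    · rintro ⟨⟨h1, hUA⟩, h2⟩
      refine ⟨h1, ?_⟩
      intro B hB
      exact key_max hUA (fun H hcv hHP => h2 H hcv (hHP.trans le_sup_right)) ((hIval B).1 hB)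
  refine ⟨⟨M, hMmin, ?_⟩, hchar⟩
  intro A hA
  exact le_antisymm (hMmin.2 A hA.1) (hA.2 M hMmin.1)


end Paper
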